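/- arXiv:1408.5177 — 2 statements merged into one kernel-verified Lean document; each statement's English description precedes it below -/
import Mathlib

section
/- Let X be a topological space and let r be an equivalence relation on X such that for every a ∈ X there exists a set V contained in the equivalence class [a] := {x ∈ X : r x a} with V open in the subspace topology of closure [a] and V dense in closure [a]. Then for all a, b ∈ X one has r a b if and only if closure [a] = closure [b]. -/
/-- If every equivalence class of an equivalence relation `r` on a topological
space contains a subset that is open and dense in the closure of the class, then two points
are related iff their classes have the same closure. -/
theorem equiv_iff_closure_class_eq {X : Type*} [TopologicalSpace X] (r : X → X → Prop)
    (hr : Equivalence r)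
    (h : ∀ a : X, ∃ V : Set X, V ⊆ {x | r x a} ∧
      (∃ U : Set X, IsOpen U ∧ V = U ∩ closure {x | r x a}) ∧
      closure {x | r x a} ⊆ closure V) :
    ∀ a b : X, r a b ↔ closure {x | r x a} = closure {x | r x b} := by
  intro a b
  constructor
  · intro hab
    have : {x | r x a} = {x | r x b} := by
      ext x
      exact ⟨fun hx => hr.trans hx hab, fun hx => hr.trans hx (hr.symm hab)⟩
    rw [this]
  · intro hC
    obtain ⟨Va, hVa_sub, ⟨Ua, hUa_open, hVa_eq⟩, hVa_dense⟩ := h a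
    obtain ⟨Vb, hVb_sub, ⟨Ub, hUb_open, hVb_eq⟩, hVb_dense⟩ := h b
    -- Va nonempty: a ∈ closure [a] ⊆ closure Va
    have ha_mem : a ∈ closure {x | r x a} := subset_closure (hr.refl a)
    have hVa_ne : Va.Nonempty := by
      rcases (closure_nonempty_iff).mp ⟨a, hVa_dense ha_mem⟩ with h'
      exact h'
    obtain ⟨x, hxVa⟩ := hVa_ne
    have hxU : x ∈ Ua := (hVa_eq ▸ hxVa).1
    have hxC : x ∈ closure {x | r x a} := (hVa_eq ▸ hxVa).2
    -- x ∈ closure Vb, x ∈ Ua open, so Ua ∩ Vb ≠ ∅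
    have hxClVb : x ∈ closure Vb := hVb_dense (hC ▸ hxC)
    have hne : (Ua ∩ Vb).Nonempty := by
      have := mem_closure_iff.mp hxClVb Ua hUa_open hxU
      exact this
    obtain ⟨y, hyU, hyVb⟩ := hne
    have hyC : y ∈ closure {x | r x a} := by
      rw [hC]; exact (hVb_eq ▸ hyVb).2
    have hyVa : y ∈ Va := by rw [hVa_eq]; exact ⟨hyU, hyC⟩
    exact hr.trans (hr.symm (hVa_sub hyVa)) (hVb_sub hyVb)
end

section
/- Let S be a set, let (X_m)_{m ∈ ℕ} be topological spaces, let ∇_m : S → X_m be maps, and let π_m : X_{m+1} → X_m be continuous maps satisfying π_m ∘ ∇_{m+1} = ∇_m for all m. Equip S with the coarsest topology making every ∇_m continuous, and assume that S with this topology is a Noetherian topological space. Then for every subset A ⊆ S there exists M ∈ ℕ such that the closure of A equals ∇_M⁻¹(closure (∇_M '' A)), where the closure of ∇_M '' A is taken in X_M. -/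
/-- With the hypotheses of Statement 10, if the initial topology on `S` is
Noetherian, then the closure of any set `A` is realized at a single finite level `M`. -/
theorem closure_eq_preimage_closure_of_noetherian {S : Type*} {X : ℕ → Type*}
    [∀ m, TopologicalSpace (X m)]
    (nabla : ∀ m, S → X m) (proj : ∀ m, X (m + 1) → X m)
    (hproj : ∀ m, Continuous (proj m))
    (hcomm : ∀ m, proj m ∘ nabla (m + 1) = nabla m)
    (hNoeth : @TopologicalSpace.NoetherianSpace S
      (⨅ m, TopologicalSpace.induced (nabla m) inferInstance))
    (A : Set S) :
    ∃ M : ℕ, @closure S (⨅ m, TopologicalSpace.induced (nabla m) inferInstance) A =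
      nabla M ⁻¹' closure (nabla M '' A) := by
  set τ : ℕ → TopologicalSpace S := fun m => TopologicalSpace.induced (nabla m) inferInstance
    with hτ
  letI t : TopologicalSpace S := ⨅ m, τ m
  set B : ℕ → Set S := fun m => nabla m ⁻¹' closure (nabla m '' A) with hB
  -- τ is antitone
  have hτanti : Antitone τ := antitone_nat_of_succ_le fun m => by
    have h1 : τ m = TopologicalSpace.induced (nabla (m + 1))
        (TopologicalSpace.induced (proj m) inferInstance) := by
      rw [hτ]; simp only
      rw [induced_compose (f := nabla (m+1)) (g := proj m), hcomm]
    rw [h1]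
    exact induced_mono (continuous_iff_le_induced.mp (hproj m))
  -- B m is the closure of A in topology τ m
  have hBm : ∀ (m : ℕ) (x : S), x ∈ @closure S (τ m) A ↔ x ∈ B m := fun m x =>
    closure_induced
  -- B is antitone
  have hBanti : Antitone B := by
    intro m n hmn x hx
    exact (hBm m x).mp (closure.mono (hτanti hmn) ((hBm n x).mpr hx))
  -- closure of A in t is the intersection of the B m
  have hkey : @closure S t A = ⋂ m, B m := by
    ext x
    simp only [Set.mem_iInter]
    rw [mem_closure_iff_clusterPt, ClusterPt, @nhds_iInf S _ τ x, iInf_inf]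
    have hdir : Directed (· ≥ ·) fun m => @nhds S (τ m) x ⊓ Filter.principal A := by
      refine Antitone.directed_ge fun m n hmn => ?_
      exact inf_le_inf_right _ (nhds_mono (hτanti hmn))
    rw [Filter.iInf_neBot_iff_of_directed' hdir]
    refine forall_congr' fun m => ?_
    rw [← hBm m x]
    letI := τ m
    rw [mem_closure_iff_clusterPt, ClusterPt]
  -- each B m is t-closed
  have hcont : ∀ m, @Continuous S (X m) t _ (nabla m) := fun m =>
    continuous_iInf_dom (i := m) continuous_induced_dom
  have hclosed : ∀ m, @IsClosed S t (B m) := fun m =>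
    IsClosed.preimage (hcont m) isClosed_closure
  -- Noetherian: minimal element among the B m
  haveI := hNoeth
  haveI : WellFoundedLT (TopologicalSpace.Closeds S) := inferInstance
  set C : ℕ → TopologicalSpace.Closeds S := fun m => ⟨B m, hclosed m⟩ with hC
  obtain ⟨c, ⟨M, rfl⟩, hmin⟩ := (IsWellFounded.wf (r := ((· < ·) :
      TopologicalSpace.Closeds S → TopologicalSpace.Closeds S → Prop))).has_min
    (Set.range C) ⟨C 0, ⟨0, rfl⟩⟩
  refine ⟨M, ?_⟩
  rw [hkey]
  apply Set.Subset.antisymm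
  · exact Set.iInter_subset B M
  · intro x hx
    simp only [Set.mem_iInter]
    intro m
    have h1 : C (max m M) ≤ C M := by
      have := hBanti (le_max_right m M)
      exact this
    have h2 : C (max m M) = C M :=
      h1.lt_or_eq.resolve_left (hmin _ ⟨max m M, rfl⟩)
    have h3 : B M ⊆ B m := by
      have := hBanti (le_max_left m M)
      calc B M = B (max m M) := congrArg TopologicalSpace.Closeds.carrier h2.symm
        _ ⊆ B m := this
    exact h3 hx
end
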